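/- Let a ∈ UT_n be invertible and ω = −t the minus-flip along the antidiagonal. The following are equivalent: (1) the inner automorphism φ_a : x ↦ a x a⁻¹ commutes with ω; (2) there exists a nonzero scalar k ∈ K such that a ω(a) = ω(a) a = −k · I. -/

import Mathlib

open Matrix

/-- The flip along the antidiagonal. -/
def tFlip {n : ℕ} {K : Type*} [Field K] (x : Matrix (Fin n) (Fin n) K) :
    Matrix (Fin n) (Fin n) K :=
  Matrix.of fun i j => x j.rev i.rev

/-- The minus-flip `ω = −t`. -/
def omg {n : ℕ} {K : Type*} [Field K] (x : Matrix (Fin n) (Fin n) K) :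
    Matrix (Fin n) (Fin n) K :=
  -tFlip x

lemma tFlip_tFlip {n : ℕ} {K : Type*} [Field K] (x : Matrix (Fin n) (Fin n) K) :
    tFlip (tFlip x) = x := by
  ext i j; simp [tFlip]

lemma tFlip_one {n : ℕ} {K : Type*} [Field K] :
    tFlip (1 : Matrix (Fin n) (Fin n) K) = 1 := by
  ext i j
  simp [tFlip, one_apply, Fin.rev_inj, eq_comm]

lemma tFlip_smul {n : ℕ} {K : Type*} [Field K] (k : K) (x : Matrix (Fin n) (Fin n) K) :
    tFlip (k • x) = k • tFlip x := by
  ext i j; simp [tFlip]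

lemma tFlip_mul {n : ℕ} {K : Type*} [Field K] (x y : Matrix (Fin n) (Fin n) K) :
    tFlip (x * y) = tFlip y * tFlip x := by
  ext i j
  simp only [tFlip, of_apply, mul_apply]
  exact Fintype.sum_equiv Fin.revPerm _ _ (fun k => by simp [mul_comm])

/-- for an invertible upper triangular `a`, the inner automorphism
`φ_a : x ↦ a x a⁻¹` commutes with `ω` on the upper triangular matrices if and only if
`a ω(a) = ω(a) a = −k·I` for some nonzero scalar `k` (i.e. `a` is `ω`-invertible). -/
theorem phi_commutes_omega_iff_omega_invertible {n : ℕ} {K : Type*} [Field K]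
    (a b : Matrix (Fin n) (Fin n) K)
    (hUTa : ∀ i j : Fin n, j < i → a i j = 0)
    (hab : a * b = 1) (hba : b * a = 1) :
    (∀ x : Matrix (Fin n) (Fin n) K, (∀ i j : Fin n, j < i → x i j = 0) →
        a * omg x * b = omg (a * x * b)) ↔
      ∃ k : K, k ≠ 0 ∧
        a * omg a = -(k • (1 : Matrix (Fin n) (Fin n) K)) ∧
        omg a * a = -(k • (1 : Matrix (Fin n) (Fin n) K)) := by
  have htab : tFlip b * tFlip a = 1 := by rw [← tFlip_mul, hab, tFlip_one]
  have htba : tFlip a * tFlip b = 1 := by rw [← tFlip_mul, hba, tFlip_one]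
  constructor
  · intro h
    have key : ∀ y : Matrix (Fin n) (Fin n) K, (∀ i j : Fin n, j < i → y i j = 0) →
        a * y * b = tFlip b * y * tFlip a := by
      intro y hy
      have hUTty : ∀ i j : Fin n, j < i → tFlip y i j = 0 := by
        intro i j hij
        exact hy j.rev i.rev (by simpa using hij)
      have h1 := h (tFlip y) hUTty
      simp only [omg, tFlip_tFlip, tFlip_mul, mul_neg, neg_mul, neg_inj, mul_assoc] at h1
      simpa [mul_assoc] using h1
    have hu : ∀ y : Matrix (Fin n) (Fin n) K, (∀ i j : Fin n, j < i → y i j = 0) →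
        (tFlip a * a) * y = y * (tFlip a * a) := by
      intro y hy
      have h1 := key y hy
      calc tFlip a * a * y = tFlip a * (a * y * b) * a := by
            simp only [mul_assoc, hba, mul_one]
        _ = tFlip a * (tFlip b * y * tFlip a) * a := by rw [h1]
        _ = y * (tFlip a * a) := by
            simp only [← mul_assoc, htba, one_mul]
    rcases n with _ | m
    · exact ⟨1, one_ne_zero, by ext i; exact i.elim0, by ext i; exact i.elim0⟩
    · set u := tFlip a * a with hu_def
      have hstd : ∀ p q : Fin (m + 1), p ≤ q →
          ∀ i j : Fin (m + 1), j < i → Matrix.single p q (1 : K) i j = 0 := by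
        intro p q hpq i j hij
        simp only [Matrix.single, of_apply]
        rw [if_neg]
        rintro ⟨rfl, rfl⟩
        exact absurd hpq (not_le.mpr hij)
      -- off-diagonal entries of u vanish
      have hoff : ∀ i j : Fin (m + 1), i ≠ j → u i j = 0 := by
        intro i j hij
        have hc := hu (Matrix.single j j 1) (hstd j j le_rfl)
        have := congrFun (congrFun hc i) j
        simpa [hij] using this
      -- diagonal entries of u are all equal
      have hdiag : ∀ p q : Fin (m + 1), p ≤ q → u p p = u q q := by
        intro p q hpq
        have hc := hu (Matrix.single p q 1) (hstd p q hpq)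
        have := congrFun (congrFun hc p) q
        simpa using this
      set k : K := u 0 0 with hk_def
      have hdiag' : ∀ p : Fin (m + 1), u p p = k := by
        intro p
        exact (hdiag 0 p (Fin.zero_le p)).symm
      have huk : u = k • (1 : Matrix (Fin (m + 1)) (Fin (m + 1)) K) := by
        ext i j
        by_cases hij : i = j
        · subst hij; simp [hdiag' i, one_apply]
        · simp [hoff i j hij, one_apply, hij]
      -- k ≠ 0 : u is invertible
      have hk0 : k ≠ 0 := by
        intro hk
        have hinv : u * (b * tFlip b) = 1 := by
          calc u * (b * tFlip b) = tFlip a * (a * b) * tFlip b := by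
                simp only [hu_def, mul_assoc]
            _ = 1 := by rw [hab, mul_one, htba]
        rw [huk, hk, zero_smul, zero_mul] at hinv
        have := congrFun (congrFun hinv 0) 0
        simp [one_apply] at this
      refine ⟨k, hk0, ?_, ?_⟩
      · -- a * omg a = -(k • 1)
        have hta : tFlip a = k • b := by
          calc tFlip a = tFlip a * (a * b) := by rw [hab, mul_one]
            _ = u * b := by rw [hu_def, mul_assoc]
            _ = k • b := by rw [huk, smul_mul_assoc, one_mul]
        rw [omg, mul_neg, hta, mul_smul_comm, hab]
      · rw [omg, neg_mul, ← hu_def, huk]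
  · rintro ⟨k, hk0, h1, h2⟩
    have hta : a * tFlip a = k • 1 := by
      have := h1
      rw [omg, mul_neg, neg_inj] at this
      exact this
    have hta' : tFlip a = k • b := by
      calc tFlip a = (b * a) * tFlip a := by rw [hba, one_mul]
        _ = b * (k • 1) := by rw [mul_assoc, hta]
        _ = k • b := by rw [mul_smul_comm, mul_one]
    have hbb : (k • b) * (k⁻¹ • a) = 1 := by
      rw [smul_mul_assoc, mul_smul_comm, smul_smul, mul_inv_cancel₀ hk0, one_smul, hba]
    have htb : tFlip b = k⁻¹ • a := by
      calc tFlip b = tFlip b * ((k • b) * (k⁻¹ • a)) := by rw [hbb, mul_one]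
        _ = (tFlip b * tFlip a) * (k⁻¹ • a) := by rw [← mul_assoc, hta']
        _ = k⁻¹ • a := by rw [htab, one_mul]
    intro x _
    rw [omg, omg, tFlip_mul, tFlip_mul, hta', htb]
    simp [smul_mul_assoc, mul_smul_comm, smul_smul, inv_mul_cancel₀ hk0, mul_inv_cancel₀ hk0, mul_assoc]
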